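/- With the setup of the previous statement (G formed from disjoint G' and G'' joined by the single edge (v,v')): taking the union of the blocks of P' and P'' without merging yields a connected partition of G of size |P'| + |P''|, and conversely every connected partition P of G arises either by merging the v-block and v'-block of its restrictions to V' and V'' or by their disjoint union; i.e., the restriction of any connected partition of G to V' (resp. V'') is a connected partition of G' (resp. G''). -/

import Mathlib

open SimpleGraph

lemma cross_aux {V : Type*} [DecidableEq V] (G : SimpleGraph V) (A : Finset V)
    (v v' : V) (hvA : v ∈ A)
    (hcross : ∀ a ∈ A, ∀ c, c ∉ A → G.Adj a c → a = v ∧ c = v')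
    (b : Finset V) {x y : (↑b : Set V)}
    (w : (G.induce (↑b : Set V)).Walk x y) (hy : (y : V) ∈ A) :
    (∀ (_ : (x : V) ∈ A) (hx' : (x : V) ∈ ((b ∩ A : Finset V) : Set V))
        (hy' : (y : V) ∈ ((b ∩ A : Finset V) : Set V)),
        (G.induce ((b ∩ A : Finset V) : Set V)).Reachable ⟨x, hx'⟩ ⟨y, hy'⟩) ∧
    ((x : V) ∉ A → ∃ hvb : (v : V) ∈ ((b ∩ A : Finset V) : Set V),
        ∀ (hy' : (y : V) ∈ ((b ∩ A : Finset V) : Set V)),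
        (G.induce ((b ∩ A : Finset V) : Set V)).Reachable ⟨v, hvb⟩ ⟨y, hy'⟩) := by
  induction w with
  | nil =>
    refine ⟨fun _ hx' hy' => ?_, fun hx => absurd hy hx⟩
    exact Reachable.refl _
  | @cons x z y h p ih =>
    have hadj : G.Adj (x : V) (z : V) := h
    by_cases hz : (z : V) ∈ A
    · constructor
      · intro hx hx' hy'
        have hz' : (z : V) ∈ ((b ∩ A : Finset V) : Set V) :=
          Finset.mem_coe.2 (Finset.mem_inter.2 ⟨z.2, hz⟩)
        have e : (G.induce ((b ∩ A : Finset V) : Set V)).Adj ⟨x, hx'⟩ ⟨z, hz'⟩ := hadj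
        exact (e.reachable).trans (ih hy |>.1 hz hz' hy')
      · intro hx
        have hxB : (x : V) ∉ A := hx
        have := hcross (z : V) hz (x : V) hxB hadj.symm
        have hzv : (z : V) = v := this.1
        have hz' : (z : V) ∈ ((b ∩ A : Finset V) : Set V) :=
          Finset.mem_coe.2 (Finset.mem_inter.2 ⟨z.2, hz⟩)
        have hvb : (v : V) ∈ ((b ∩ A : Finset V) : Set V) := hzv ▸ hz'
        refine ⟨hvb, fun hy' => ?_⟩
        have := (ih hy).1 hz hz' hy'
        have heq : (⟨v, hvb⟩ : ((b ∩ A : Finset V) : Set V)) = ⟨z, hz'⟩ :=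
          Subtype.ext hzv.symm
        rw [heq]; exact this
    · constructor
      · intro hx hx' hy'
        have := hcross (x : V) hx (z : V) hz hadj
        have hxv : (x : V) = v := this.1
        obtain ⟨hvb, hr⟩ := (ih hy).2 hz
        have heq : (⟨x, hx'⟩ : ((b ∩ A : Finset V) : Set V)) = ⟨v, hvb⟩ :=
          Subtype.ext hxv
        rw [heq]; exact hr hy'
      · intro hx
        obtain ⟨hvb, hr⟩ := (ih hy).2 hz
        exact ⟨hvb, hr⟩

/-- Setup as before: `G` is a graph on the disjoint union `A ∪ B` whose only edge
between `A` and `B` is `(v, v')`.  The disjoint union of connected partitions `P'` of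
`A` and `P''` of `B` is a connected partition of `G` of size `|P'| + |P''|`.
Conversely, every connected partition `P` of `G` restricts to connected partitions of
`A` and of `B`, and each of its blocks is contained in `A`, contained in `B`, or
contains both `v` and `v'` (i.e. `P` arises by disjoint union or by merging the
`v`-block with the `v'`-block). -/
theorem stmt_14 {V : Type*} [Fintype V] [DecidableEq V] (G : SimpleGraph V)
    (A B : Finset V) (hdisj : Disjoint A B) (hcover : A ∪ B = Finset.univ)
    (v v' : V) (hv : v ∈ A) (hv' : v' ∈ B) (hadj : G.Adj v v')
    (honly : ∀ a ∈ A, ∀ b ∈ B, G.Adj a b → a = v ∧ b = v') :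
    (∀ (P' : Finpartition A) (P'' : Finpartition B),
      (∀ b ∈ P'.parts, (G.induce (b : Set V)).Connected) →
      (∀ b ∈ P''.parts, (G.induce (b : Set V)).Connected) →
      ∃ P : Finpartition (Finset.univ : Finset V),
        P.parts = P'.parts ∪ P''.parts ∧
        (∀ b ∈ P.parts, (G.induce (b : Set V)).Connected) ∧
        P.parts.card = P'.parts.card + P''.parts.card) ∧
    (∀ P : Finpartition (Finset.univ : Finset V),
      (∀ b ∈ P.parts, (G.induce (b : Set V)).Connected) →
      (∀ b ∈ P.parts, (b ∩ A).Nonempty → (G.induce ((b ∩ A : Finset V) : Set V)).Connected) ∧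
      (∀ b ∈ P.parts, (b ∩ B).Nonempty → (G.induce ((b ∩ B : Finset V) : Set V)).Connected) ∧
      (∀ b ∈ P.parts, b ⊆ A ∨ b ⊆ B ∨ (v ∈ b ∧ v' ∈ b))) := by
  have hnotA : ∀ x : V, x ∉ A → x ∈ B := by
    intro x hx
    have : x ∈ A ∪ B := hcover ▸ Finset.mem_univ x
    exact (Finset.mem_union.1 this).resolve_left hx
  have hnotB : ∀ x : V, x ∉ B → x ∈ A := by
    intro x hx
    have : x ∈ A ∪ B := hcover ▸ Finset.mem_univ x
    exact (Finset.mem_union.1 this).resolve_right hx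
  have hcrossA : ∀ a ∈ A, ∀ c, c ∉ A → G.Adj a c → a = v ∧ c = v' := by
    intro a ha c hc hadj'
    exact honly a ha c (hnotA c hc) hadj'
  have hcrossB : ∀ a ∈ B, ∀ c, c ∉ B → G.Adj a c → a = v' ∧ c = v := by
    intro a ha c hc hadj'
    have := honly c (hnotB c hc) a ha hadj'.symm
    exact ⟨this.2, this.1⟩
  constructor
  · intro P' P'' hP' hP''
    have hdisjparts : Disjoint P'.parts P''.parts := by
      rw [Finset.disjoint_left]
      intro c hc hc'
      have h1 : c ⊆ A := P'.le hc
      have h2 : c ⊆ B := P''.le hc'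
      obtain ⟨x, hx⟩ := Finset.nonempty_iff_ne_empty.2 (P'.ne_bot hc)
      exact (Finset.disjoint_left.1 hdisj (h1 hx)) (h2 hx)
    refine ⟨⟨P'.parts ∪ P''.parts, ?_, ?_, ?_⟩, rfl, ?_, Finset.card_union_of_disjoint hdisjparts⟩
    · rw [Finset.supIndep_iff_pairwiseDisjoint]
      intro c hc d hd hne
      simp only [Finset.coe_union, Set.mem_union, Finset.mem_coe] at hc hd
      rcases hc with hc | hc <;> rcases hd with hd | hd
      · exact P'.disjoint hc hd hne
      · exact hdisj.mono (P'.le hc) (P''.le hd)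
      · exact (hdisj.symm).mono (P''.le hc) (P'.le hd)
      · exact P''.disjoint hc hd hne
    · rw [Finset.sup_union, P'.sup_parts, P''.sup_parts, Finset.sup_eq_union, hcover]
    · intro h
      rcases Finset.mem_union.1 h with h | h
      · exact P'.bot_notMem h
      · exact P''.bot_notMem h
    · intro c hc
      rcases Finset.mem_union.1 hc with h | h
      · exact hP' c h
      · exact hP'' c h
  · intro P hcon
    refine ⟨?_, ?_, ?_⟩
    · intro b hb hne
      obtain ⟨w0, hw0⟩ := hne
      have hw0' : w0 ∈ ((b ∩ A : Finset V) : Set V) := Finset.mem_coe.2 hw0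
      rw [SimpleGraph.connected_iff]; refine ⟨?_, ⟨⟨w0, hw0'⟩⟩⟩
      rintro ⟨x, hx⟩ ⟨y, hy⟩
      have hxb : x ∈ b := (Finset.mem_inter.1 (Finset.mem_coe.1 hx)).1
      have hxA : x ∈ A := (Finset.mem_inter.1 (Finset.mem_coe.1 hx)).2
      have hyb : y ∈ b := (Finset.mem_inter.1 (Finset.mem_coe.1 hy)).1
      have hyA : y ∈ A := (Finset.mem_inter.1 (Finset.mem_coe.1 hy)).2
      obtain ⟨w⟩ := (hcon b hb).preconnected ⟨x, Finset.mem_coe.2 hxb⟩ ⟨y, Finset.mem_coe.2 hyb⟩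
      exact (cross_aux G A v v' hv hcrossA b w hyA).1 hxA hx hy
    · intro b hb hne
      obtain ⟨w0, hw0⟩ := hne
      have hw0' : w0 ∈ ((b ∩ B : Finset V) : Set V) := Finset.mem_coe.2 hw0
      rw [SimpleGraph.connected_iff]; refine ⟨?_, ⟨⟨w0, hw0'⟩⟩⟩
      rintro ⟨x, hx⟩ ⟨y, hy⟩
      have hxb : x ∈ b := (Finset.mem_inter.1 (Finset.mem_coe.1 hx)).1
      have hxB : x ∈ B := (Finset.mem_inter.1 (Finset.mem_coe.1 hx)).2
      have hyb : y ∈ b := (Finset.mem_inter.1 (Finset.mem_coe.1 hy)).1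
      have hyB : y ∈ B := (Finset.mem_inter.1 (Finset.mem_coe.1 hy)).2
      obtain ⟨w⟩ := (hcon b hb).preconnected ⟨x, Finset.mem_coe.2 hxb⟩ ⟨y, Finset.mem_coe.2 hyb⟩
      exact (cross_aux G B v' v hv' hcrossB b w hyB).1 hxB hx hy
    · intro b hb
      by_cases hA : b ⊆ A
      · exact Or.inl hA
      by_cases hB : b ⊆ B
      · exact Or.inr (Or.inl hB)
      refine Or.inr (Or.inr ?_)
      obtain ⟨p, hpb, hpA⟩ := Finset.not_subset.1 hA
      obtain ⟨q, hqb, hqB⟩ := Finset.not_subset.1 hB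
      have hqA : q ∈ A := hnotB q hqB
      have hpB : p ∈ B := hnotA p hpA
      obtain ⟨w⟩ := (hcon b hb).preconnected ⟨p, Finset.mem_coe.2 hpb⟩ ⟨q, Finset.mem_coe.2 hqb⟩
      obtain ⟨w'⟩ := (hcon b hb).preconnected ⟨q, Finset.mem_coe.2 hqb⟩ ⟨p, Finset.mem_coe.2 hpb⟩
      obtain ⟨hvb, -⟩ := (cross_aux G A v v' hv hcrossA b w hqA).2 hpA
      obtain ⟨hv'b, -⟩ := (cross_aux G B v' v hv' hcrossB b w' hpB).2 hqB
      exact ⟨(Finset.mem_inter.1 (Finset.mem_coe.1 hvb)).1,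
        (Finset.mem_inter.1 (Finset.mem_coe.1 hv'b)).1⟩
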